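/- Let G be a 2-connected ribbon graph, T a spanning tree, c a vertex, g an edge of T with endpoints c and x, and f = χ(c,g) an edge with endpoints c and s, where f is not in T. Then applying one step of rotor rotation at c to T_s (replacing g by f) yields an acyclic rotor configuration (i.e., T \ g ∪ f is a spanning tree) if and only if the path in T from c to s passes through x. -/

import Mathlib

open Finset

noncomputable section
open scoped Classical

/-- A finite multigraph without loops: each edge has an unordered pair of
distinct endpoints. -/
structure Multigraph (V E : Type) where
  ends : E → Sym2 V
  loopless : ∀ e, ¬ (ends e).IsDiag

/-- A ribbon structure: for each vertex, a "next edge" map describing the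
cyclic ordering of the edges incident to that vertex. -/
structure RibbonStruct (V E : Type) where
  next : V → E → E

/-- The group of degree-zero divisors on the vertex set `V`. -/
def Div0 (V : Type) [Fintype V] : AddSubgroup (V → ℤ) where
  carrier := {D | ∑ v, D v = 0}
  add_mem' := by
    intro a b ha hb
    simp only [Set.mem_setOf_eq, Pi.add_apply, Finset.sum_add_distrib] at *
    omega
  zero_mem' := by simp
  neg_mem' := by
    intro a ha
    simp only [Set.mem_setOf_eq, Pi.neg_apply, Finset.sum_neg_distrib] at *
    omega

/-- The divisor `c - s`. -/
def chipDiv {V : Type} [DecidableEq V] (c s : V) : V → ℤ :=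
  fun v => (if v = c then 1 else 0) - (if v = s then 1 else 0)

namespace Multigraph

variable {V E : Type} [Fintype V] [Fintype E] [DecidableEq V] [DecidableEq E]

/-- Two vertices are adjacent if they are the two endpoints of some edge. -/
def Adj (G : Multigraph V E) (x y : V) : Prop := ∃ e : E, G.ends e = s(x, y)

/-- A multigraph is connected if any two vertices are joined by a walk. -/
def Connected (G : Multigraph V E) : Prop := ∀ x y : V, Relation.ReflTransGen G.Adj x y

/-- Adjacency using only edges from the set `T`. -/
def AdjOn (G : Multigraph V E) (T : Finset E) (x y : V) : Prop := ∃ e ∈ T, G.ends e = s(x, y)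

/-- Reachability using only edges from the set `T`. -/
def ReachOn (G : Multigraph V E) (T : Finset E) (x y : V) : Prop :=
  Relation.ReflTransGen (G.AdjOn T) x y

/-- A spanning tree: a spanning connected edge set of the correct cardinality. -/
def IsSpanningTree (G : Multigraph V E) (T : Finset E) : Prop :=
  (∀ x y : V, G.ReachOn T x y) ∧ T.card = Fintype.card V - 1

/-- The degree of a vertex: the number of incident edges. -/
def degree (G : Multigraph V E) (v : V) : ℕ := (univ.filter fun e => v ∈ G.ends e).card

/-- The number of edges of `T` incident to `v`. -/
def treeDegree (G : Multigraph V E) (T : Finset E) (v : V) : ℕ :=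
  (T.filter fun e => v ∈ G.ends e).card

/-- A leaf vertex of `T`: incident to exactly one edge of `T`. -/
def IsLeafVertex (G : Multigraph V E) (T : Finset E) (v : V) : Prop := G.treeDegree T v = 1

/-- A leaf edge of `T`: an edge of `T` incident to a leaf vertex. -/
def IsLeafEdge (G : Multigraph V E) (T : Finset E) (e : E) : Prop :=
  e ∈ T ∧ ∃ v, v ∈ G.ends e ∧ G.IsLeafVertex T v

/-- Adjacency within `T` avoiding the vertex `x`. -/
def AdjOnAvoid (G : Multigraph V E) (T : Finset E) (x : V) (a b : V) : Prop :=
  G.AdjOn T a b ∧ a ≠ x ∧ b ≠ x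

/-- "The path in `T` from `a` to `r` passes through `y`": `a` cannot reach `r`
within `T` while avoiding the vertex `y`. -/
def PathThrough (G : Multigraph V E) (T : Finset E) (r a y : V) : Prop :=
  ¬ Relation.ReflTransGen (G.AdjOnAvoid T y) a r

/-- Adjacency in `G` avoiding the vertex `x`. -/
def AdjAvoid (G : Multigraph V E) (x : V) (a b : V) : Prop := G.Adj a b ∧ a ≠ x ∧ b ≠ x

/-- 2-connected: connected and with no cut vertices. -/
def TwoConnected (G : Multigraph V E) : Prop :=
  G.Connected ∧ ∀ x a b : V, a ≠ x → b ≠ x →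
    Relation.ReflTransGen (G.AdjAvoid x) a b

/-- The row of the Laplacian matrix of `G` corresponding to the vertex `v`
(the divisor obtained by "firing" the vertex `v`, negated). -/
def lapRow (G : Multigraph V E) (v : V) : V → ℤ := fun w =>
  if w = v then (G.degree v : ℤ) else -((univ.filter fun e => G.ends e = s(v, w)).card : ℤ)

/-- The subgroup of divisors generated by the rows of the Laplacian, i.e. the
integer image of the Laplacian. -/
def LapSubgroup (G : Multigraph V E) : AddSubgroup (V → ℤ) :=
  AddSubgroup.closure (Set.range G.lapRow)

/-- Two divisors are firing equivalent when their difference lies in the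
integer image of the Laplacian. -/
def FiringEquiv (G : Multigraph V E) (D D' : V → ℤ) : Prop := D - D' ∈ G.LapSubgroup

/-- The sandpile group (Picard group) `Pic⁰(G)`:
degree-zero divisors modulo the image of the Laplacian. -/
def Pic0 (G : Multigraph V E) : Type :=
  Div0 V ⧸ ((G.LapSubgroup).addSubgroupOf (Div0 V))

instance (G : Multigraph V E) : AddCommGroup G.Pic0 :=
  QuotientAddGroup.Quotient.addCommGroup _

/-- The class in `Pic⁰(G)` of a degree-zero divisor. -/
def picClass (G : Multigraph V E) (D : V → ℤ) (hD : D ∈ Div0 V) : G.Pic0 :=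
  QuotientAddGroup.mk ⟨D, hD⟩

/-- `cfg` is the rotor configuration of the tree `T` with sink `s` (each
non-sink vertex carries the first edge of `T` on its path to `s`). -/
def IsRotorCfg (G : Multigraph V E) (s : V) (T : Finset E) (cfg : V → E) : Prop :=
  ∀ v, v ≠ s → cfg v ∈ T ∧ v ∈ G.ends (cfg v) ∧ ¬ G.ReachOn (T.erase (cfg v)) v s

/-- One step along the rotors of `cfg` (with sink `s`):
from `a ≠ s` across the rotor at `a` to its other endpoint `b`. -/
def RotorStep (G : Multigraph V E) (s : V) (cfg : V → E) (a b : V) : Prop :=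
  a ≠ s ∧ G.ends (cfg a) = s(a, b)

/-- A rotor configuration is acyclic: following rotors never returns to a
starting vertex. -/
def RotorAcyclic (G : Multigraph V E) (s : V) (cfg : V → E) : Prop :=
  ∀ a : V, ¬ Relation.TransGen (G.RotorStep s cfg) a a

/-- One step of the single-chip rotor-routing process: the state is a pair
(rotor configuration, chip position); the rotor at the chip's position is
rotated one step in the cyclic order `χ`, and the chip then moves across the
new rotor. -/
def RRStep (G : Multigraph V E) (χ : RibbonStruct V E) (p q : (V → E) × V) : Prop :=
  q.1 = Function.update p.1 p.2 (χ.next p.2 (p.1 p.2)) ∧ G.ends (q.1 p.2) = s(p.2, q.2)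

/-- A run of length `n` of the rotor-routing algorithm with sink `s`. -/
def IsRun (G : Multigraph V E) (χ : RibbonStruct V E) (s : V)
    (σ : ℕ → (V → E) × V) (n : ℕ) : Prop :=
  ∀ i, i < n → (σ i).2 ≠ s ∧ G.RRStep χ (σ i) (σ i.succ)

/-- At step `i` of the run `σ`, the chip crosses the edge `e` from `u` to `w`. -/
def Crosses (G : Multigraph V E) (σ : ℕ → (V → E) × V) (i : ℕ) (e : E) (u w : V) : Prop :=
  (σ i).2 = u ∧ (σ (i + 1)).2 = w ∧ (σ (i + 1)).1 u = e ∧ G.ends e = s(u, w)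

/-- A dart of `G`: an edge together with a chosen head. -/
def Dart (G : Multigraph V E) : Type := {p : E × V // p.2 ∈ G.ends p.1}

/-- The "next dart along a face" relation determined by the ribbon structure. -/
def FaceRel (G : Multigraph V E) (χ : RibbonStruct V E) (a b : G.Dart) : Prop :=
  b.1.1 = χ.next a.1.2 a.1.1 ∧ G.ends b.1.1 = s(a.1.2, b.1.2)

/-- The number of faces of the ribbon graph `(G, χ)`: the number of orbits of
the face map on darts. -/
def numFaces (G : Multigraph V E) (χ : RibbonStruct V E) : ℕ :=
  Nat.card (Quot (G.FaceRel χ))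

end Multigraph

/-- The axioms making `χ` an honest ribbon structure on `G`: at each vertex,
`next` is a bijection preserving the incident edges and acting transitively
(i.e. cyclically) on them. -/
def RibbonStruct.IsRibbon {V E : Type} [Fintype V] [Fintype E]
    (χ : RibbonStruct V E) (G : Multigraph V E) : Prop :=
  (∀ v : V, Function.Bijective (χ.next v)) ∧
  (∀ v e, v ∈ G.ends e → v ∈ G.ends (χ.next v e)) ∧
  (∀ v e f, v ∈ G.ends e → v ∈ G.ends f → ∃ m : ℕ, (χ.next v)^[m] e = f)

/-- A plane graph: a connected ribbon graph of genus 0 (Euler's formula). -/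
def Multigraph.IsPlane {V E : Type} [Fintype V] [Fintype E] [DecidableEq V] [DecidableEq E]
    (G : Multigraph V E) (χ : RibbonStruct V E) : Prop :=
  G.Connected ∧ χ.IsRibbon G ∧
    Fintype.card V + G.numFaces χ = Fintype.card E + 2

/-- An isomorphism of ribbon graphs: a pair of bijections on vertices and
edges preserving incidence and the cyclic orderings. -/
def IsRibbonIso {V E V' E' : Type}
    (G : Multigraph V E) (χ : RibbonStruct V E)
    (G' : Multigraph V' E') (χ' : RibbonStruct V' E')
    (φV : V ≃ V') (φE : E ≃ E') : Prop :=
  (∀ e, G'.ends (φE e) = (G.ends e).map φV) ∧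
  ∀ v e, v ∈ G.ends e → φE (χ.next v e) = χ'.next (φV v) (φE e)


section Aux

lemma rtg_lift' {α : Type*} {r s : α → α → Prop}
    (h : ∀ a b, r a b → Relation.ReflTransGen s a b)
    {u v : α} (huv : Relation.ReflTransGen r u v) : Relation.ReflTransGen s u v := by
  induction huv with
  | refl => exact .refl
  | tail _ step ih => exact ih.trans (h _ _ step)

namespace Multigraph

variable {V E : Type} [Fintype V] [Fintype E] [DecidableEq V] [DecidableEq E]
variable (G : Multigraph V E)

lemma adjOn_symm {S : Finset E} {a b : V} (h : G.AdjOn S a b) : G.AdjOn S b a := by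
  obtain ⟨e, he, hends⟩ := h
  exact ⟨e, he, by rw [hends, Sym2.eq_swap]⟩

lemma reachOn_symm {S : Finset E} {a b : V} (h : G.ReachOn S a b) : G.ReachOn S b a :=
  haveI : Std.Symm (G.AdjOn S) := ⟨fun _ _ hab => G.adjOn_symm hab⟩
  Std.Symm.symm (r := Relation.ReflTransGen (G.AdjOn S)) _ _ h

lemma reachOn_mono {S S' : Finset E} (hSS : S ⊆ S') {a b : V} (h : G.ReachOn S a b) :
    G.ReachOn S' a b :=
  Relation.ReflTransGen.mono (r := G.AdjOn S) (p := G.AdjOn S')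
    (fun _ _ ⟨e, he, hends⟩ => ⟨e, hSS he, hends⟩) _ _ h

lemma reachOn_empty {u v : V} (h : G.ReachOn (∅ : Finset E) u v) : u = v := by
  induction h with
  | refl => rfl
  | tail _ step _ => obtain ⟨e, he, -⟩ := step; simp at he

/-- The connected component of `v` with respect to the edge set `S`. -/
def compC (S : Finset E) (v : V) : Finset V := univ.filter (fun w => G.ReachOn S v w)

lemma mem_compC {S : Finset E} {v w : V} : w ∈ G.compC S v ↔ G.ReachOn S v w := by
  simp [compC]

lemma compC_eq_iff {S : Finset E} {u v : V} :
    G.compC S u = G.compC S v ↔ G.ReachOn S u v := by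
  constructor
  · intro h
    have : v ∈ G.compC S v := G.mem_compC.2 .refl
    rw [← h] at this
    exact G.mem_compC.1 this
  · intro h
    ext w
    simp only [mem_compC]
    exact ⟨fun hw => (G.reachOn_symm h).trans hw, fun hw => h.trans hw⟩

lemma reach_insert_decomp {S : Finset E} {e : E} {a b : V} (hab : G.ends e = s(a, b))
    {u v : V} (h : G.ReachOn (insert e S) u v) :
    G.ReachOn S u v ∨
      ((G.ReachOn S u a ∨ G.ReachOn S u b) ∧ (G.ReachOn S a v ∨ G.ReachOn S b v)) := by
  induction h with
  | refl => exact Or.inl .refl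
  | tail _ step ih =>
    rename_i w v0 _
    obtain ⟨e', he', hends⟩ := step
    rcases Finset.mem_insert.1 he' with he' | he'
    · subst he'
      rw [hab] at hends
      rcases Sym2.eq_iff.1 hends with ⟨hw, hv0⟩ | ⟨hw, hv0⟩
      · subst hw; subst hv0
        refine Or.inr ⟨?_, Or.inr .refl⟩
        rcases ih with h1 | ⟨h1, _⟩
        · exact Or.inl h1
        · exact h1
      · subst hw; subst hv0
        refine Or.inr ⟨?_, Or.inl .refl⟩
        rcases ih with h1 | ⟨h1, _⟩
        · exact Or.inr h1
        · exact h1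
    · have hstep : G.AdjOn S w v0 := ⟨e', he', hends⟩
      rcases ih with h1 | ⟨h1, h2⟩
      · exact Or.inl (h1.tail hstep)
      · refine Or.inr ⟨h1, ?_⟩
        rcases h2 with h2 | h2
        · exact Or.inl (h2.tail hstep)
        · exact Or.inr (h2.tail hstep)

lemma ncomp_insert_le (S : Finset E) (e : E) :
    (univ.image (G.compC S)).card ≤ (univ.image (G.compC (insert e S))).card + 1 := by
  obtain ⟨a, b, hab⟩ : ∃ a b : V, G.ends e = s(a, b) := by
    induction G.ends e using Sym2.inductionOn with
    | hf a b => exact ⟨a, b, rfl⟩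
  have hF : ∀ u v : V, G.compC S u = G.compC S v →
      G.compC (insert e S) u = G.compC (insert e S) v := by
    intro u v h
    exact (G.compC_eq_iff (S := insert e S)).2
      (G.reachOn_mono (Finset.subset_insert e S) ((G.compC_eq_iff).1 h))
  classical
  -- F : pick a representative and saturate
  have key : ((univ.image (G.compC S)).erase (G.compC S a)).card ≤
      (univ.image (G.compC (insert e S))).card := by
    refine Finset.card_le_card_of_injOn
      (fun C => G.compC (insert e S) (if h : ∃ v, G.compC S v = C then h.choose else a)) ?_ ?_
    · intro C hC
      exact Finset.mem_image.2 ⟨_, Finset.mem_univ _, rfl⟩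
    · intro C hC D hD hCD
      simp only [Finset.coe_erase, Set.mem_diff, Finset.mem_coe, Finset.mem_image] at hC hD
      obtain ⟨⟨u, -, hu⟩, hCa⟩ := hC
      obtain ⟨⟨v, -, hv⟩, hDa⟩ := hD
      have hCex : ∃ w, G.compC S w = C := ⟨u, hu⟩
      have hDex : ∃ w, G.compC S w = D := ⟨v, hv⟩
      simp only [dif_pos hCex, dif_pos hDex] at hCD
      have hCu : G.compC (insert e S) u = G.compC (insert e S) v := by
        have h1 := hF hCex.choose u (by rw [hCex.choose_spec, hu])
        have h2 := hF hDex.choose v (by rw [hDex.choose_spec, hv])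
        rw [← h1, ← h2, hCD]
      have hreach : G.ReachOn (insert e S) u v := (G.compC_eq_iff).1 hCu
      rcases G.reach_insert_decomp hab hreach with h1 | ⟨h1, h2⟩
      · rw [← hu, ← hv, (G.compC_eq_iff).2 h1]
      · -- u and v are each connected (in S) to a or b
        have hub : G.ReachOn S u b := by
          rcases h1 with h1 | h1
          · exact absurd (show C = G.compC S a by
              rw [← hu, (G.compC_eq_iff).2 h1]) (by simpa using hCa)
          · exact h1
        have hvb : G.ReachOn S v b := by
          rcases h2 with h2 | h2
          · exact absurd (show D = G.compC S a by
              rw [← hv, (G.compC_eq_iff).2 (G.reachOn_symm h2)]) (by simpa using hDa)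
          · exact G.reachOn_symm h2
        rw [← hu, ← hv, (G.compC_eq_iff).2 (hub.trans (G.reachOn_symm hvb))]
  have herase : (univ.image (G.compC S)).card ≤
      ((univ.image (G.compC S)).erase (G.compC S a)).card + 1 := by
    by_cases hmem : G.compC S a ∈ univ.image (G.compC S)
    · rw [Finset.card_erase_of_mem hmem]
      have := Finset.card_pos.2 ⟨_, hmem⟩
      omega
    · rw [Finset.erase_eq_of_notMem hmem]
      omega
  omega

lemma card_count (S : Finset E) :
    Fintype.card V ≤ (univ.image (G.compC S)).card + S.card := by
  induction S using Finset.induction_on with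
  | empty =>
    have hinj : Function.Injective (G.compC (∅ : Finset E)) := by
      intro u v h
      exact G.reachOn_empty ((G.compC_eq_iff).1 h)
    rw [Finset.card_image_of_injective _ hinj]
    simp [Finset.card_univ]
  | @insert e S hne ih =>
    have h1 := G.ncomp_insert_le S e
    rw [Finset.card_insert_of_notMem hne]
    omega

lemma card_le_of_reach (S : Finset E) (v0 : V) (h : ∀ u v : V, G.ReachOn S u v) :
    Fintype.card V ≤ S.card + 1 := by
  have hsub : univ.image (G.compC S) ⊆ {G.compC S v0} := by
    intro C hC
    obtain ⟨v, -, hv⟩ := Finset.mem_image.1 hC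
    simp only [Finset.mem_singleton]
    rw [← hv]
    exact (G.compC_eq_iff).2 (G.reachOn_symm (h v0 v))
  have := G.card_count S
  have := Finset.card_le_card hsub
  simp only [Finset.card_singleton] at this
  omega

end Multigraph

end Aux

/-- On a 2-connected ribbon graph, for a tree edge `g` with
endpoints `c, x` whose successor `f = χ(c,g)` has endpoints `c, s` and lies
outside `T`, the one-step rotation at `c` yields an acyclic configuration
(i.e. `T \ g ∪ f` is a spanning tree) iff the path in `T` from `c` to `s`
passes through `x`. -/
theorem single_step_criterion
    {V E : Type} [Fintype V] [Fintype E] [DecidableEq V] [DecidableEq E]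
    (G : Multigraph V E) (χ : RibbonStruct V E) (hrib : χ.IsRibbon G)
    (h2 : G.TwoConnected) (T : Finset E) (hT : G.IsSpanningTree T)
    (c x s : V) (g f : E) (hg : g ∈ T) (hge : G.ends g = s(c, x))
    (hnext : χ.next c g = f) (hfe : G.ends f = s(c, s)) (hfT : f ∉ T) :
    G.IsSpanningTree (insert f (T.erase g)) ↔ G.PathThrough T s c x := by
  classical
  have hcx : c ≠ x := by
    intro h
    exact G.loopless g (by rw [hge, h]; exact Sym2.mk_isDiag_iff.2 rfl)
  have hcardV : 2 ≤ Fintype.card V := Fintype.one_lt_card_iff.2 ⟨c, x, hcx⟩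
  have hcardT : T.card = Fintype.card V - 1 := hT.2
  have hcardE : (T.erase g).card = Fintype.card V - 2 := by
    rw [Finset.card_erase_of_mem hg, hcardT]
    omega
  have notTotal : ¬ ∀ u v : V, G.ReachOn (T.erase g) u v := by
    intro h
    have := G.card_le_of_reach (T.erase g) c h
    omega
  have claim1 : ∀ v : V, G.ReachOn (T.erase g) v c ∨ G.ReachOn (T.erase g) v x := by
    intro v
    have hvc : Relation.ReflTransGen (G.AdjOn T) v c := hT.1 v c
    induction hvc using Relation.ReflTransGen.head_induction_on with
    | refl => exact Or.inl .refl
    | @head a b step hrtg ih =>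
      obtain ⟨e, he, hends⟩ := step
      by_cases heg : e = g
      · subst heg
        rcases Sym2.eq_iff.1 (hge.symm.trans hends) with ⟨h1, h2⟩ | ⟨h1, h2⟩
        · exact Or.inl (h1 ▸ Relation.ReflTransGen.refl)
        · exact Or.inr (h2 ▸ Relation.ReflTransGen.refl)
      · have hstep : G.AdjOn (T.erase g) a b := ⟨e, Finset.mem_erase.2 ⟨heg, he⟩, hends⟩
        rcases ih with h1 | h1
        · exact Or.inl (Relation.ReflTransGen.head hstep h1)
        · exact Or.inr (Relation.ReflTransGen.head hstep h1)
  have hRcx : ¬ G.ReachOn (T.erase g) c x := by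
    intro h
    apply notTotal
    have hc : ∀ v, G.ReachOn (T.erase g) v c := by
      intro v
      rcases claim1 v with h1 | h1
      · exact h1
      · exact h1.trans (G.reachOn_symm h)
    intro u v
    exact (hc u).trans (G.reachOn_symm (hc v))
  constructor
  · intro hsp
    intro havoid
    have hRcs : G.ReachOn (T.erase g) c s := by
      refine rtg_lift' ?_ havoid
      rintro a b ⟨⟨e, he, hends⟩, hax, hbx⟩
      have heg : e ≠ g := by
        intro h
        subst h
        rcases Sym2.eq_iff.1 (hge.symm.trans hends) with ⟨h1, h2⟩ | ⟨h1, h2⟩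
        · exact hbx h2.symm
        · exact hax h2.symm
      exact Relation.ReflTransGen.single ⟨e, Finset.mem_erase.2 ⟨heg, he⟩, hends⟩
    apply notTotal
    intro u v
    refine rtg_lift' ?_ (hsp.1 u v)
    rintro a b ⟨e, he, hends⟩
    rcases Finset.mem_insert.1 he with he | he
    · subst he
      rcases Sym2.eq_iff.1 (hfe.symm.trans hends) with ⟨h1, h2⟩ | ⟨h1, h2⟩
      · subst h1; subst h2; exact hRcs
      · subst h1; subst h2; exact G.reachOn_symm hRcs
    · exact Relation.ReflTransGen.single ⟨e, he, hends⟩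
  · intro hPT
    have key : ∀ w, G.ReachOn (T.erase g) c w →
        Relation.ReflTransGen (G.AdjOnAvoid T x) c w := by
      intro w h
      induction h with
      | refl => exact .refl
      | @tail w w' hcw step ih =>
        have hwx : w ≠ x := fun hh => hRcx (hh ▸ hcw)
        have hw'x : w' ≠ x := fun hh => hRcx (hh ▸ (hcw.tail step))
        obtain ⟨e, he, hends⟩ := step
        exact ih.tail ⟨⟨e, Finset.mem_of_mem_erase he, hends⟩, hwx, hw'x⟩
    have hRcs : ¬ G.ReachOn (T.erase g) c s := fun h => hPT (key s h)
    have hRsx : G.ReachOn (T.erase g) s x := by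
      rcases claim1 s with h1 | h1
      · exact absurd (G.reachOn_symm h1) hRcs
      · exact h1
    constructor
    · have hsub : T.erase g ⊆ insert f (T.erase g) := Finset.subset_insert _ _
      have hsc : G.ReachOn (insert f (T.erase g)) s c :=
        Relation.ReflTransGen.single
          ⟨f, Finset.mem_insert_self _ _, by rw [hfe]; exact Sym2.eq_swap⟩
      have hc : ∀ v, G.ReachOn (insert f (T.erase g)) v c := by
        intro v
        rcases claim1 v with h1 | h1
        · exact G.reachOn_mono hsub h1
        · exact (G.reachOn_mono hsub h1).trans
            ((G.reachOn_mono hsub (G.reachOn_symm hRsx)).trans hsc)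
      intro u v
      exact (hc u).trans (G.reachOn_symm (hc v))
    · rw [Finset.card_insert_of_notMem (fun h => hfT (Finset.mem_of_mem_erase h)), hcardE]
      omega

end
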